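/- Assume I is a (μ,2)-entangled linear order and θ is a regular cardinal with θ < μ. Then there is a set A ⊆ I with |A| < μ such that for all x < y in I with {x,y} ⊄ A, the open interval (x,y) has at least θ elements. -/

import Mathlib

open Cardinal

universe u

private lemma auxL {α : Type u} [LinearOrder α] {θ : Cardinal.{u}} (hθ : ℵ₀ ≤ θ)
    (h : ∀ x : α, #(Set.Iio x) < θ) : #α ≤ θ := by
  classical
  set T : Set α := {x | ∀ y, WellOrderingRel y x → y < x} with hT
  haveI : IsWellOrder (Subtype T) (Subrel WellOrderingRel T) :=
    inferInstanceAs (IsWellOrder _ (Subrel WellOrderingRel (fun x => x ∈ T)))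
  haveI : IsWellOrder T (Subrel WellOrderingRel T) :=
    inferInstanceAs (IsWellOrder _ (Subrel WellOrderingRel (fun x => x ∈ T)))
  have hcof : ∀ x : α, ∃ t ∈ T, x ≤ t := by
    intro x
    have hne : {y | x ≤ y}.Nonempty := ⟨x, le_refl x⟩
    have hwf := (WellOrderingRel.isWellOrder (α := α)).wf
    refine ⟨hwf.min _ hne, ?_, hwf.min_mem _ hne⟩
    intro y hy
    have hyn : y ∉ {y | x ≤ y} := fun hmem => hwf.not_lt_min _ hmem hy
    exact lt_of_lt_of_le (not_le.1 hyn) (hwf.min_mem _ hne)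
  have hTθ : #T ≤ θ := by
    have ho : Ordinal.type (Subrel WellOrderingRel T) ≤ θ.ord := by
      by_contra hlt
      push_neg at hlt
      obtain ⟨t, ht⟩ := Ordinal.typein_surj (Subrel WellOrderingRel T) hlt
      have h1 : #{s // Subrel WellOrderingRel T s t} = θ := by
        rw [← Ordinal.card_typein, ht, Cardinal.card_ord]
      have h2 : #{s // Subrel WellOrderingRel T s t} ≤ #(Set.Iio (t.1 : α)) := by
        refine Cardinal.mk_le_of_injective (f := fun s => ⟨s.1.1, t.2 s.1.1 s.2⟩) ?_
        intro s1 s2 hs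
        simp only [Subtype.mk.injEq] at hs
        exact Subtype.ext (Subtype.ext (Subtype.mk.inj hs))
      rw [h1] at h2
      exact absurd (h2.trans_lt (h _)) (lt_irrefl θ)
    calc #T = (Ordinal.type (Subrel WellOrderingRel T)).card := (Ordinal.card_type _).symm
      _ ≤ θ.ord.card := Ordinal.card_le_card ho
      _ = θ := Cardinal.card_ord θ
  have hcover : (⋃ t : T, Set.Iic (t : α)) = Set.univ := by
    refine Set.eq_univ_of_forall fun x => ?_
    obtain ⟨t, htT, hxt⟩ := hcof x
    exact Set.mem_iUnion.2 ⟨⟨t, htT⟩, hxt⟩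
  have hIic : ∀ t : T, #(Set.Iic (t : α)) ≤ θ := by
    intro t
    have h1 : Set.Iic (t : α) = insert (t : α) (Set.Iio (t : α)) := Set.Iio_insert.symm
    rw [h1]
    have h2 : (1 : Cardinal) < θ := one_lt_aleph0.trans_le hθ
    exact (Cardinal.mk_insert_le.trans_lt (Cardinal.add_lt_of_lt hθ (h _) h2)).le
  calc #α = #(Set.univ : Set α) := Cardinal.mk_univ.symm
    _ = #(⋃ t : T, Set.Iic (t : α)) := by rw [hcover]
    _ ≤ Cardinal.sum (fun t : T => #(Set.Iic (t : α))) := Cardinal.mk_iUnion_le_sum_mk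
    _ ≤ Cardinal.sum (fun _ : T => θ) := Cardinal.sum_le_sum _ _ hIic
    _ = #T * θ := Cardinal.sum_const' _ _
    _ ≤ θ * θ := mul_le_mul_left hTθ θ
    _ = θ := Cardinal.mul_eq_self hθ

private lemma auxL' {α : Type u} [LinearOrder α] {θ : Cardinal.{u}} (hθ : ℵ₀ ≤ θ)
    (h : ∀ x : α, #(Set.Ioi x) < θ) : #α ≤ θ := by
  have h2 : ∀ x : αᵒᵈ, #(Set.Iio x) < θ := by
    intro x
    have : #(Set.Iio x) ≤ #(Set.Ioi (OrderDual.ofDual x)) := by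
      refine Cardinal.mk_le_of_injective (f := fun y => ⟨OrderDual.ofDual y.1, y.2⟩) ?_
      intro a b hab
      simp only [Subtype.mk.injEq] at hab
      exact Subtype.ext (congrArg Subtype.val hab)
    exact this.trans_lt (h _)
  have := auxL (α := αᵒᵈ) hθ h2
  calc #α = #αᵒᵈ := Cardinal.mk_congr OrderDual.toDual
    _ ≤ θ := this

private lemma icc_small {I : Type u} [LinearOrder I] {θ : Cardinal.{u}} (hθ : ℵ₀ ≤ θ)
    {a b : I} (h : #(Set.Ioo a b) < θ) : #(Set.Icc a b) < θ := by
  have hsub : Set.Icc a b ⊆ insert a (insert b (Set.Ioo a b)) := by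
    intro z hz
    rcases eq_or_lt_of_le hz.1 with h1 | h1
    · exact Set.mem_insert_iff.2 (Or.inl h1.symm)
    rcases eq_or_lt_of_le hz.2 with h2 | h2
    · exact Set.mem_insert_iff.2 (Or.inr (Set.mem_insert_iff.2 (Or.inl h2)))
    · exact Set.mem_insert_iff.2 (Or.inr (Set.mem_insert_iff.2 (Or.inr ⟨h1, h2⟩)))
  have h1 : (1 : Cardinal) < θ := one_lt_aleph0.trans_le hθ
  calc #(Set.Icc a b) ≤ #(insert a (insert b (Set.Ioo a b)) : Set I) :=
        Cardinal.mk_le_mk_of_subset hsub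
    _ ≤ #(insert b (Set.Ioo a b) : Set I) + 1 := Cardinal.mk_insert_le
    _ < θ := Cardinal.add_lt_of_lt hθ
        (Cardinal.mk_insert_le.trans_lt (Cardinal.add_lt_of_lt hθ h h1)) h1

/-- the `θ`-closeness class of `c`. -/
private def cls {I : Type u} [LinearOrder I] (θ : Cardinal.{u}) (c : I) : Set I :=
  {x | #(Set.Ioo (min x c) (max x c)) < θ}

private lemma cls_le {I : Type u} [LinearOrder I] {θ : Cardinal.{u}} (hθ : ℵ₀ ≤ θ)
    (c : I) : #(cls θ c) ≤ θ := by
  classical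
  set U : Set I := {x | c < x ∧ #(Set.Ioo c x) < θ} with hU
  set L : Set I := {x | x < c ∧ #(Set.Ioo x c) < θ} with hL
  have hsub : cls θ c ⊆ L ∪ ({c} ∪ U) := by
    intro x hx
    simp only [cls, Set.mem_setOf_eq] at hx
    rcases lt_trichotomy x c with h | h | h
    · refine Or.inl ⟨h, ?_⟩
      have : min x c = x := min_eq_left h.le
      have h2 : max x c = c := max_eq_right h.le
      rwa [this, h2] at hx
    · exact Or.inr (Or.inl h)
    · refine Or.inr (Or.inr ⟨h, ?_⟩)
      have : min x c = c := min_eq_right h.le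
      have h2 : max x c = x := max_eq_left h.le
      rwa [this, h2] at hx
  have hUθ : #U ≤ θ := by
    refine auxL hθ ?_
    intro x
    have : #(Set.Iio x) ≤ #(Set.Ioo c (x : I)) := by
      refine Cardinal.mk_le_of_injective
        (f := fun y => ⟨(y.1 : I), ⟨y.1.2.1, Subtype.coe_lt_coe.2 y.2⟩⟩) ?_
      intro a b hab
      simp only [Subtype.mk.injEq] at hab
      exact Subtype.ext (Subtype.ext (Subtype.mk.inj hab))
    exact this.trans_lt x.2.2
  have hLθ : #L ≤ θ := by
    refine auxL' hθ ?_
    intro x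
    have : #(Set.Ioi x) ≤ #(Set.Ioo (x : I) c) := by
      refine Cardinal.mk_le_of_injective
        (f := fun y => ⟨(y.1 : I), ⟨Subtype.coe_lt_coe.2 y.2, y.1.2.1⟩⟩) ?_
      intro a b hab
      simp only [Subtype.mk.injEq] at hab
      exact Subtype.ext (Subtype.ext (Subtype.mk.inj hab))
    exact this.trans_lt x.2.2
  have h1 : (1 : Cardinal) ≤ θ := one_le_aleph0.trans hθ
  calc #(cls θ c) ≤ #(L ∪ ({c} ∪ U) : Set I) := Cardinal.mk_le_mk_of_subset hsub
    _ ≤ #L + #(({c} ∪ U : Set I)) := Cardinal.mk_union_le _ _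
    _ ≤ #L + (#({c} : Set I) + #U) := by gcongr; exact Cardinal.mk_union_le _ _
    _ ≤ θ + (θ + θ) := by
        refine add_le_add hLθ (add_le_add ?_ hUθ)
        rw [Cardinal.mk_singleton]
        exact h1
    _ = θ := by rw [Cardinal.add_eq_self hθ, Cardinal.add_eq_self hθ]

private lemma overlap_small {I : Type u} [LinearOrder I] {θ : Cardinal.{u}} (hθ : ℵ₀ ≤ θ)
    {a b c d x w : I} (hax : a ≤ x) (hxb : x ≤ b) (haw : a ≤ w) (hwb : w ≤ b)
    (hcw : c ≤ w) (hwd : w ≤ d)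
    (hab : #(Set.Ioo a b) < θ) (hcd : #(Set.Ioo c d) < θ) :
    x ∈ cls θ c := by
  have hsub : Set.Ioo (min x c) (max x c) ⊆ Set.Icc a b ∪ Set.Icc c d := by
    intro z hz
    rcases le_or_gt z b with h1 | h1
    · rcases le_or_gt a z with h2 | h2
      · exact Or.inl ⟨h2, h1⟩
      · -- z < a
        refine Or.inr ⟨?_, (h2.le.trans haw).trans hwd⟩
        rcases min_cases x c with ⟨hm, _⟩ | ⟨hm, _⟩
        · exact absurd (hm ▸ hz.1) (not_lt.2 (h2.trans_le hax).le)
        · exact (hm ▸ hz.1).le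
    · -- b < z
      exfalso
      rcases max_cases x c with ⟨hm, _⟩ | ⟨hm, _⟩
      · exact absurd (hm ▸ hz.2) (not_lt.2 (hxb.trans h1.le))
      · have : z < c := hm ▸ hz.2
        exact absurd ((hcw.trans hwb).trans_lt h1) (not_lt.2 this.le)
  simp only [cls, Set.mem_setOf_eq]
  calc #(Set.Ioo (min x c) (max x c)) ≤ #(Set.Icc a b ∪ Set.Icc c d : Set I) :=
        Cardinal.mk_le_mk_of_subset hsub
    _ ≤ #(Set.Icc a b) + #(Set.Icc c d) := Cardinal.mk_union_le _ _
    _ < θ := Cardinal.add_lt_of_lt hθ (icc_small hθ hab) (icc_small hθ hcd)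

/-- Proposition 6.14: if `I` is a (μ,2)-entangled linear order and `θ < μ` is
    regular, then there is `A ⊆ I` with `|A| < μ` such that every interval
    `(x,y)` with not both endpoints in `A` has at least `θ` elements. -/
theorem stmt_15 (μ θ : Cardinal.{u}) (I : Type u) [LinearOrder I]
    (hθreg : θ.IsRegular) (hθμ : θ < μ)
    (hcard : μ ≤ #I)
    (hent : ∀ t : Fin 2 → μ.ord.ToType → I,
      (∀ e, Function.Injective (t e)) →
      (∀ α β : μ.ord.ToType, t 0 α ≠ t 1 β) →
      ∃ α β : μ.ord.ToType, α < β ∧ t 0 α < t 0 β ∧ t 1 β < t 1 α) :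
    ∃ A : Set I, #A < μ ∧
      ∀ x y : I, x < y → ¬(x ∈ A ∧ y ∈ A) → θ ≤ #(Set.Ioo x y) := by
  classical
  have hθℵ : ℵ₀ ≤ θ := hθreg.aleph0_le
  have hμℵ : ℵ₀ ≤ μ := hθℵ.trans hθμ.le
  refine ⟨{x | ∃ y, y ≠ x ∧ #(Set.Ioo (min x y) (max x y)) < θ}, ?_, ?_⟩
  · -- the set of points close to another point is small
    set 𝒮 : Set (Set (I × I)) :=
      {S | (∀ p ∈ S, p.1 < p.2 ∧ #(Set.Ioo p.1 p.2) < θ) ∧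
        ∀ p ∈ S, ∀ q ∈ S, p ≠ q → p.2 < q.1 ∨ q.2 < p.1} with h𝒮
    have hzorn : ∀ c ⊆ 𝒮, IsChain (· ⊆ ·) c → ∃ ub ∈ 𝒮, ∀ s ∈ c, s ⊆ ub := by
      intro c hc hchain
      refine ⟨⋃₀ c, ⟨?_, ?_⟩, fun s hs => Set.subset_sUnion_of_mem hs⟩
      · rintro p hp
        obtain ⟨s, hsc, hps⟩ := hp
        exact (hc hsc).1 p hps
      · rintro p hp q hq hpq
        obtain ⟨s, hsc, hps⟩ := hp
        obtain ⟨s', hsc', hqs⟩ := hq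
        rcases hchain.total hsc hsc' with h | h
        · exact (hc hsc').2 p (h hps) q hqs hpq
        · exact (hc hsc).2 p hps q (h hqs) hpq
    obtain ⟨M, hM⟩ := zorn_subset 𝒮 hzorn
    have hMgood := hM.prop
    have hlt : ∀ p ∈ M, p.1 < p.2 := fun p hp => (hMgood.1 p hp).1
    have hsmall : ∀ p ∈ M, #(Set.Ioo p.1 p.2) < θ := fun p hp => (hMgood.1 p hp).2
    have hdisj : ∀ p ∈ M, ∀ q ∈ M, p ≠ q → p.2 < q.1 ∨ q.2 < p.1 := hMgood.2
    rcases lt_or_ge #M μ with hM2 | hM2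
    · -- the maximal family is small; every point of A is in a class of an endpoint
      have hsubA : {x | ∃ y, y ≠ x ∧ #(Set.Ioo (min x y) (max x y)) < θ} ⊆
          ⋃ p : M, (cls θ (p : I × I).1 ∪ cls θ (p : I × I).2) := by
        intro x hx
        obtain ⟨y, hyx, hxy⟩ := hx
        set a := min x y with ha'
        set b := max x y with hb'
        have hab : a < b := min_lt_max.2 (Ne.symm hyx)
        have hxa : a ≤ x := min_le_left x y
        have hxb : x ≤ b := le_max_left x y
        by_cases hsep : ∀ q ∈ M, q ≠ (a, b) → b < q.1 ∨ q.2 < a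
        · -- we can insert (a,b); by maximality it is in M
          have hgood : insert (a, b) M ∈ 𝒮 := by
            constructor
            · rintro p hp
              rcases Set.mem_insert_iff.1 hp with h | h
              · rw [h]; exact ⟨hab, hxy⟩
              · exact hMgood.1 p h
            · rintro p hp q hq hpq
              rcases Set.mem_insert_iff.1 hp with h | h <;>
                rcases Set.mem_insert_iff.1 hq with h' | h'
              · exact absurd (h.trans h'.symm) hpq
              · have hq' : q ≠ (a, b) := fun he => hpq (h.trans he.symm)
                rcases hsep q h' hq' with hh | hh
                · rw [h]; exact Or.inl hh
                · rw [h]; exact Or.inr hh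
              · have hp' : p ≠ (a, b) := fun he => hpq (he.trans h'.symm)
                rcases hsep p h hp' with hh | hh
                · rw [h']; exact Or.inr hh
                · rw [h']; exact Or.inl hh
              · exact hdisj p h q h' hpq
          have hmem : (a, b) ∈ M := hM.2 hgood (Set.subset_insert _ _) (Set.mem_insert _ _)
          refine Set.mem_iUnion.2 ⟨⟨(a, b), hmem⟩, Or.inl ?_⟩
          -- x = a or x = b; either way x ∈ cls θ a
          rcases le_total x y with h | h
          · have : x = a := (min_eq_left h).symm
            show #(Set.Ioo (min x a) (max x a)) < θ
            rw [← this, min_self, max_self]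
            simpa using aleph0_pos.trans_le hθℵ
          · have hxb' : x = b := (max_eq_left h).symm
            show #(Set.Ioo (min x a) (max x a)) < θ
            rw [hxb', min_eq_right hab.le, max_eq_left hab.le]
            exact hxy
        · push_neg at hsep
          obtain ⟨q, hq, hqne, h1, h2⟩ := hsep
          -- [a,b] and [q.1,q.2] overlap at w := max a q.1
          have hq12 : q.1 ≤ q.2 := (hlt q hq).le
          have hx' : x ∈ cls θ q.1 :=
            overlap_small hθℵ hxa hxb (le_max_left a q.1)
              (max_le hab.le h1) (le_max_right a q.1) (max_le h2 hq12) hxy (hsmall q hq)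
          exact Set.mem_iUnion.2 ⟨⟨q, hq⟩, Or.inl hx'⟩
      calc #{x | ∃ y, y ≠ x ∧ #(Set.Ioo (min x y) (max x y)) < θ}
          ≤ #(⋃ p : M, (cls θ (p : I × I).1 ∪ cls θ (p : I × I).2)) :=
            Cardinal.mk_le_mk_of_subset hsubA
        _ ≤ Cardinal.sum (fun p : M => #(cls θ (p : I × I).1 ∪ cls θ (p : I × I).2 : Set I)) :=
            Cardinal.mk_iUnion_le_sum_mk
        _ ≤ Cardinal.sum (fun _ : M => θ) := by
            refine Cardinal.sum_le_sum _ _ fun p => ?_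
            calc #(cls θ (p : I × I).1 ∪ cls θ (p : I × I).2 : Set I)
                ≤ #(cls θ (p : I × I).1) + #(cls θ (p : I × I).2) := Cardinal.mk_union_le _ _
              _ ≤ θ + θ := add_le_add (cls_le hθℵ _) (cls_le hθℵ _)
              _ = θ := Cardinal.add_eq_self hθℵ
        _ = #M * θ := Cardinal.sum_const' _ _
        _ < μ := Cardinal.mul_lt_of_lt hμℵ hM2 hθμ
    · -- μ ≤ #M : contradiction with entangledness
      exfalso
      have : Nonempty (μ.ord.ToType ↪ M) := by
        rw [← Cardinal.le_def, Cardinal.mk_ord_toType]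
        exact hM2
      obtain ⟨g⟩ := this
      set t : Fin 2 → μ.ord.ToType → I :=
        fun e α => if e = 0 then ((g α : I × I)).1 else ((g α : I × I)).2 with ht
      have ht0 : ∀ α, t 0 α = (g α : I × I).1 := fun _ => if_pos rfl
      have ht1 : ∀ α, t 1 α = (g α : I × I).2 := fun _ => if_neg (by decide)
      have hgM : ∀ α, (g α : I × I) ∈ M := fun α => (g α).2
      have hgne : ∀ α β : μ.ord.ToType, α ≠ β → (g α : I × I) ≠ (g β : I × I) :=
        fun α β hne he => hne (g.injective (Subtype.ext he))
      have hinj : ∀ e, Function.Injective (t e) := by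
        intro e
        have : e = 0 ∨ e = 1 := by omega
        rcases this with rfl | rfl
        · intro α β he
          rw [ht0, ht0] at he
          by_contra hne
          rcases hdisj _ (hgM α) _ (hgM β) (hgne α β hne) with hd | hd
          · rw [← he] at hd
            exact absurd (hlt _ (hgM α)) (not_lt.2 hd.le)
          · rw [he] at hd
            exact absurd (hlt _ (hgM β)) (not_lt.2 hd.le)
        · intro α β he
          rw [ht1, ht1] at he
          by_contra hne
          rcases hdisj _ (hgM α) _ (hgM β) (hgne α β hne) with hd | hd
          · rw [he] at hd
            exact absurd (hlt _ (hgM β)) (not_lt.2 hd.le)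
          · rw [← he] at hd
            exact absurd (hlt _ (hgM α)) (not_lt.2 hd.le)
      have hne01 : ∀ α β : μ.ord.ToType, t 0 α ≠ t 1 β := by
        intro α β he
        rw [ht0, ht1] at he
        rcases eq_or_ne α β with rfl | hne
        · exact absurd (hlt _ (hgM α)) (not_lt.2 he.ge)
        · rcases hdisj _ (hgM α) _ (hgM β) (hgne α β hne) with hd | hd
          · have : (g α : I × I).1 < (g β : I × I).2 :=
              ((hlt _ (hgM α)).trans hd).trans_le (hlt _ (hgM β)).le
            rw [he] at this
            exact lt_irrefl _ this
          · rw [he] at hd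
            exact lt_irrefl _ hd
      obtain ⟨α, β, _, h0, h1⟩ := hent t hinj hne01
      rw [ht0, ht0] at h0
      rw [ht1, ht1] at h1
      have hpq : (g α : I × I) ≠ (g β : I × I) := by
        intro h
        rw [h] at h0
        exact lt_irrefl _ h0
      rcases hdisj _ (hgM α) _ (hgM β) hpq with hd | hd
      · exact absurd ((h1.trans hd).trans (hlt _ (hgM β))) (lt_irrefl _)
      · exact absurd ((h0.trans (hlt _ (hgM β))).trans hd) (lt_irrefl _)
  · intro x y hxy hn
    by_contra hcon
    rw [not_le] at hcon
    refine hn ⟨⟨y, hxy.ne', ?_⟩, ⟨x, hxy.ne, ?_⟩⟩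
    · rw [min_eq_left hxy.le, max_eq_right hxy.le]
      exact hcon
    · rw [min_eq_right hxy.le, max_eq_left hxy.le]
      exact hcon
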